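/- If X ∈ Sym(3N) is positive semidefinite with rank(X) = 3, whose first diagonal 3×3 block is I₃ and whose i-th diagonal 3×3 block is α_i I₃ with α_i > 0 for i ≥ 2, then X factors as X = ŪᵀŪ where Ū = [R̄₁, …, R̄_N] is a 3×3N matrix with R̄₁ ∈ O(3) and R̄_i ∈ 𝔰O(3) for i ≥ 2. Moreover U = R̄₁ᵀŪ has first block equal to I₃ and satisfies UᵀU = X. -/

import Mathlib

open Matrix

theorem rank3_psd_factorization
    (N : ℕ) [NeZero N] (X : Matrix (Fin N × Fin 3) (Fin N × Fin 3) ℝ)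
    (hX : X.PosSemidef) (hrank : X.rank = 3)
    (hblk1 : ∀ k l : Fin 3, X (0, k) (0, l) = (1 : Matrix (Fin 3) (Fin 3) ℝ) k l)
    (hblk : ∀ i : Fin N, i ≠ 0 → ∃ α : ℝ, 0 < α ∧ ∀ k l : Fin 3,
      X (i, k) (i, l) = α * (1 : Matrix (Fin 3) (Fin 3) ℝ) k l) :
    ∃ Ubar : Matrix (Fin 3) (Fin N × Fin 3) ℝ,
      X = Ubarᵀ * Ubar ∧
      -- the first block R̄₁ of Ū is in O(3)
      (Matrix.of fun j k => Ubar j ((0 : Fin N), k) : Matrix (Fin 3) (Fin 3) ℝ)ᵀ *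
        (Matrix.of fun j k => Ubar j ((0 : Fin N), k)) = 1 ∧
      -- the other blocks R̄ᵢ of Ū are in 𝔰O(3)
      (∀ i : Fin N, i ≠ 0 → ∃ s : ℝ, 0 < s ∧ ∃ R : Matrix (Fin 3) (Fin 3) ℝ,
        Rᵀ * R = 1 ∧ (Matrix.of fun j k => Ubar j (i, k)) = s • R) ∧
      -- U = R̄₁ᵀ Ū has first block I₃ and satisfies UᵀU = X
      (∀ j k : Fin 3,
        ((Matrix.of fun j k => Ubar j ((0 : Fin N), k))ᵀ * Ubar) j ((0 : Fin N), k) =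
          (1 : Matrix (Fin 3) (Fin 3) ℝ) j k) ∧
      ((Matrix.of fun j k => Ubar j ((0 : Fin N), k))ᵀ * Ubar)ᵀ *
        ((Matrix.of fun j k => Ubar j ((0 : Fin N), k))ᵀ * Ubar) = X := by
  classical
  obtain ⟨V, hVc⟩ : ∃ V : Matrix (Fin N × Fin 3) (Fin N × Fin 3) ℝ, X = Vᴴ * V := by
    open scoped MatrixOrder Matrix.Norms.L2Operator in
    exact CStarAlgebra.nonneg_iff_eq_star_mul_self.mp hX.nonneg
  have hV' : X = Vᵀ * V := by
    have h : Vᴴ = Vᵀ := by ext p q; simp [conjTranspose_apply]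
    rw [hVc, h]
  set V0 : Matrix (Fin N × Fin 3) (Fin 3) ℝ :=
    V.submatrix id (fun k => ((0 : Fin N), k)) with hV0def
  have hentry : ∀ p q, X p q = ∑ r, V r p * V r q := by
    intro p q; rw [hV']; simp [Matrix.mul_apply]
  have hV0V0 : V0ᵀ * V0 = 1 := by
    ext k l
    rw [Matrix.mul_apply]
    simp only [transpose_apply, hV0def, submatrix_apply, id_eq]
    rw [← hentry (0, k) (0, l)]
    exact hblk1 k l
  have hrV : V.rank = 3 := by
    rw [← Matrix.rank_transpose_mul_self V, ← hV']; exact hrank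
  have hrV0 : V0.rank = 3 := by
    rw [← Matrix.rank_transpose_mul_self V0, hV0V0]; simp
  have hle : LinearMap.range V0.mulVecLin ≤ LinearMap.range V.mulVecLin := by
    rintro x ⟨c, rfl⟩
    refine ⟨fun p => if p.1 = 0 then c p.2 else 0, ?_⟩
    ext p
    simp only [mulVecLin_apply, mulVec, dotProduct, hV0def, submatrix_apply, id_eq]
    rw [Fintype.sum_prod_type]
    have h1 : ∀ i : Fin N,
        (∑ k, V p (i, k) * (if i = 0 then c k else 0)) =
          if i = 0 then ∑ k, V p (0, k) * c k else 0 := by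
      intro i
      split
      · next h => subst h; rfl
      · simp
    simp_rw [h1]
    simp
  have heq : LinearMap.range V0.mulVecLin = LinearMap.range V.mulVecLin := by
    apply Submodule.eq_of_le_of_finrank_le hle
    have h1 : Module.finrank ℝ (LinearMap.range V.mulVecLin) = 3 := hrV
    have h2 : Module.finrank ℝ (LinearMap.range V0.mulVecLin) = 3 := hrV0
    rw [h1, h2]
  have hfix : ∀ x, V0 *ᵥ (V0ᵀ *ᵥ (V *ᵥ x)) = V *ᵥ x := by
    intro x
    have hx : V *ᵥ x ∈ LinearMap.range V0.mulVecLin := heq ▸ ⟨x, rfl⟩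
    obtain ⟨c, hc⟩ := hx
    simp only [mulVecLin_apply] at hc
    rw [← hc, mulVec_mulVec, mulVec_mulVec, Matrix.mul_assoc, hV0V0]
    simp
  have hPV : V0 * (V0ᵀ * V) = V := by
    have key : ∀ x, (V0 * (V0ᵀ * V)) *ᵥ x = V *ᵥ x := by
      intro x
      rw [← Matrix.mul_assoc, ← mulVec_mulVec, ← mulVec_mulVec]
      exact hfix x
    ext p q
    have h := congrFun (key (Pi.single q 1)) p
    simpa using h
  set Ubar : Matrix (Fin 3) (Fin N × Fin 3) ℝ := V0ᵀ * V with hUbar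
  have hfact : X = Ubarᵀ * Ubar := by
    have h : Ubarᵀ * Ubar = Vᵀ * (V0 * (V0ᵀ * V)) := by
      rw [hUbar, transpose_mul, transpose_transpose, Matrix.mul_assoc]
    rw [h, hPV, hV']
  have hUe : ∀ (j : Fin 3) (i : Fin N) (k : Fin 3), Ubar j (i, k) = X (0, j) (i, k) := by
    intro j i k
    rw [hentry, hUbar, Matrix.mul_apply]
    simp [hV0def]
  have hB0 : (Matrix.of fun j k => Ubar j ((0 : Fin N), k)) = (1 : Matrix (Fin 3) (Fin 3) ℝ) := by
    ext j k
    rw [Matrix.of_apply, hUe, hblk1]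
  refine ⟨Ubar, hfact, ?_, ?_, ?_, ?_⟩
  · rw [hB0]; simp
  · intro i hi
    obtain ⟨α, hα, hαe⟩ := hblk i hi
    have hBi : (Matrix.of fun j k => Ubar j (i, k) : Matrix (Fin 3) (Fin 3) ℝ)ᵀ *
        (Matrix.of fun j k => Ubar j (i, k)) = α • (1 : Matrix (Fin 3) (Fin 3) ℝ) := by
      ext k l
      rw [Matrix.mul_apply]
      simp only [transpose_apply, Matrix.of_apply]
      have h2 : X (i, k) (i, l) = ∑ j, Ubar j (i, k) * Ubar j (i, l) := by
        rw [hfact, Matrix.mul_apply]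
        simp
      rw [← h2, hαe, Matrix.smul_apply, smul_eq_mul]
    have hs : (0 : ℝ) < Real.sqrt α := Real.sqrt_pos.mpr hα
    refine ⟨Real.sqrt α, hs,
      (Real.sqrt α)⁻¹ • (Matrix.of fun j k => Ubar j (i, k)), ?_, ?_⟩
    · rw [transpose_smul, Matrix.smul_mul, Matrix.mul_smul, hBi, smul_smul, smul_smul]
      have : (Real.sqrt α)⁻¹ * (Real.sqrt α)⁻¹ * α = 1 := by
        rw [← Real.mul_self_sqrt hα.le]
        field_simp
        rw [Real.sqrt_sq hs.le]
      rw [this, one_smul]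
    · rw [smul_smul, mul_inv_cancel₀ hs.ne', one_smul]
  · intro j k
    rw [hB0, transpose_one, Matrix.one_mul, hUe, hblk1]
  · rw [hB0, transpose_one, Matrix.one_mul, ← hfact]
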